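/- Let the setup be as described, fix p₀ ∈ P, and let C̃₁ := { u : cl(P) → ℝ convex | ∫_{∂P} α u dσ = 1 and inf_P u = u(p₀) = 0 }. Assume: (i) L(ψ') > 0 for every simple piecewise linear convex function ψ' with nonempty crease; (ii) u₀ ∈ C̃₁ attains the infimum of L over C̃₁ and L(u₀) ≤ 0; (iii) ψ is a simple piecewise linear convex function with nonempty crease; (iv) a₀ > 0 is such that u' := u₀ − a₀ψ is convex on cl(P) with inf_P u' = u'(p₀) = 0. Then a contradiction follows (such a configuration is impossible). -/

import Mathlib

open MeasureTheory Set Filter Topology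

private lemma convexK_subset_closure_interior {E : Type*} [NormedAddCommGroup E]
    [NormedSpace ℝ E] {K : Set E} (hK : Convex ℝ K) (hne : (interior K).Nonempty) :
    K ⊆ closure (interior K) := by
  intro y hy
  obtain ⟨z, hz⟩ := hne
  have hcont : Continuous fun t : ℝ => y + t • (z - y) := by continuity
  have h : Tendsto (fun t : ℝ => y + t • (z - y)) (nhdsWithin 0 (Ioi 0)) (nhds y) := by
    have h0 := (hcont.tendsto 0).mono_left
      (nhdsWithin_le_nhds : nhdsWithin (0:ℝ) (Ioi 0) ≤ nhds 0)
    simpa using h0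
  refine mem_closure_of_tendsto h ?_
  filter_upwards [Ioc_mem_nhdsGT_of_mem (⟨le_refl _, zero_lt_one⟩ : (0:ℝ) ∈ Ico 0 1)] with t ht
  exact hK.add_smul_sub_mem_interior hy hz ht

private lemma frontier_subset_segments
    (S : Finset (EuclideanSpace ℝ (Fin 2)))
    (hne : (interior (convexHull ℝ (S : Set (EuclideanSpace ℝ (Fin 2))))).Nonempty) :
    frontier (convexHull ℝ (S : Set (EuclideanSpace ℝ (Fin 2)))) ⊆
      ⋃ a ∈ S, ⋃ b ∈ S, segment ℝ a b := by
  classical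
  intro x hx
  set K := convexHull ℝ (S : Set (EuclideanSpace ℝ (Fin 2))) with hKdef
  have hKconv : Convex ℝ K := convex_convexHull ℝ _
  have hKcl : IsClosed K := (S.finite_toSet.isCompact_convexHull ℝ).isClosed
  have hxK : x ∈ K := by
    have := frontier_subset_closure (s := K) hx
    rwa [hKcl.closure_eq] at this
  have hxint : x ∉ interior K := fun h => hx.2 h
  obtain ⟨f, hf⟩ := geometric_hahn_banach_open_point hKconv.interior isOpen_interior hxint
  have hfK : ∀ y ∈ K, f y ≤ f x := by
    intro y hy
    have h1 : y ∈ closure (interior K) := convexK_subset_closure_interior hKconv hne hy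
    have h2 : closure (interior K) ⊆ {z | f z ≤ f x} :=
      closure_minimal (fun z hz => (hf z hz).le) (isClosed_le f.continuous continuous_const)
    exact h2 h1
  -- convex representation of x
  obtain ⟨w, hw0, hw1, hwx⟩ := Finset.mem_convexHull.mp hxK
  have hxsum : x = ∑ s ∈ S, w s • s := by
    rw [← hwx, Finset.centerMass_eq_of_sum_1 _ _ hw1]; rfl
  have hfs : f x = ∑ s ∈ S, w s * f s := by
    rw [hxsum, map_sum]
    simp [smul_eq_mul]
  have hzero : ∀ s ∈ S, w s * (f x - f s) = 0 := by
    have hsum0 : ∑ s ∈ S, w s * (f x - f s) = 0 := by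
      have : ∑ s ∈ S, w s * (f x - f s)
          = (∑ s ∈ S, w s) * f x - ∑ s ∈ S, w s * f s := by
        rw [Finset.sum_mul, ← Finset.sum_sub_distrib]; exact Finset.sum_congr rfl (fun _ _ => by ring)
      rw [this, hw1, one_mul, ← hfs, sub_self]
    intro s hs
    have hnn : ∀ s ∈ S, 0 ≤ w s * (f x - f s) := fun s hs =>
      mul_nonneg (hw0 s hs) (sub_nonneg.mpr (hfK s (subset_convexHull ℝ _ (by exact_mod_cast hs))))
    exact (Finset.sum_eq_zero_iff_of_nonneg hnn).mp hsum0 s hs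
  -- coordinates
  set v0 : ℝ := f (EuclideanSpace.single (0 : Fin 2) (1:ℝ)) with hv0
  set v1 : ℝ := f (EuclideanSpace.single (1 : Fin 2) (1:ℝ)) with hv1
  have hdecomp : ∀ y : EuclideanSpace ℝ (Fin 2), f y = v0 * y 0 + v1 * y 1 := by
    intro y
    have hy : y = y 0 • EuclideanSpace.single (0 : Fin 2) (1:ℝ)
        + y 1 • EuclideanSpace.single (1 : Fin 2) (1:ℝ) := by
      ext i
      fin_cases i <;> simp [EuclideanSpace.single_apply]
    conv_lhs => rw [hy]
    simp [smul_eq_mul, mul_comm]; rfl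
  set g : EuclideanSpace ℝ (Fin 2) →L[ℝ] ℝ :=
    v1 • (EuclideanSpace.proj (0 : Fin 2)) - v0 • (EuclideanSpace.proj (1 : Fin 2)) with hgdef
  have hg : ∀ y : EuclideanSpace ℝ (Fin 2), g y = v1 * y 0 - v0 * y 1 := by
    intro y; simp [hgdef, smul_eq_mul]
  have hvne : v0 ≠ 0 ∨ v1 ≠ 0 := by
    by_contra h
    push_neg at h
    obtain ⟨h0, h1⟩ := h
    obtain ⟨z, hz⟩ := hne
    have := hf z hz
    rw [hdecomp z, hdecomp x, h0, h1] at this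
    simp at this
  have hQ : v0 ^ 2 + v1 ^ 2 ≠ 0 := by
    rcases hvne with h | h <;> positivity
  have hinj : ∀ y z : EuclideanSpace ℝ (Fin 2), f y = f z → g y = g z → y = z := by
    intro y z h1 h2
    rw [hdecomp y, hdecomp z] at h1
    rw [hg y, hg z] at h2
    have e0 : (v0 ^ 2 + v1 ^ 2) * (y 0 - z 0) = 0 := by linear_combination v0 * h1 + v1 * h2
    have e1 : (v0 ^ 2 + v1 ^ 2) * (y 1 - z 1) = 0 := by linear_combination v1 * h1 - v0 * h2
    have hy0 : y 0 = z 0 := by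
      rcases mul_eq_zero.mp e0 with h | h
      · exact absurd h hQ
      · linarith
    have hy1 : y 1 = z 1 := by
      rcases mul_eq_zero.mp e1 with h | h
      · exact absurd h hQ
      · linarith
    ext i
    fin_cases i <;> assumption
  -- the face
  set T : Finset (EuclideanSpace ℝ (Fin 2)) := S.filter (fun s => w s ≠ 0) with hTdef
  have hTsub : T ⊆ S := Finset.filter_subset _ _
  have hTne : T.Nonempty := by
    obtain ⟨s, hs, hws⟩ := Finset.exists_ne_zero_of_sum_ne_zero (hw1 ▸ one_ne_zero)
    exact ⟨s, Finset.mem_filter.mpr ⟨hs, hws⟩⟩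
  have hfT : ∀ s ∈ T, f s = f x := by
    intro s hs
    obtain ⟨hsS, hws⟩ := Finset.mem_filter.mp hs
    have := hzero s hsS
    rcases mul_eq_zero.mp this with h | h
    · exact absurd h hws
    · linarith [sub_eq_zero.mp h]
  have hwT : ∑ s ∈ T, w s = 1 := by
    rw [hTdef, Finset.sum_filter_of_ne (fun s _ h => h), hw1]
  have hgx : g x = ∑ s ∈ T, w s * g s := by
    have h1 : g x = ∑ s ∈ S, w s * g s := by
      rw [hxsum, map_sum]; simp [smul_eq_mul]
    rw [h1, ← Finset.sum_filter_of_ne (p := fun s => w s ≠ 0)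
      (fun s _ h => by intro hw; rw [hw] at h; simp at h)]
  obtain ⟨a, haT, ha⟩ := T.exists_min_image g hTne
  obtain ⟨b, hbT, hb⟩ := T.exists_max_image g hTne
  have hga : g a ≤ g x := by
    calc g a = ∑ s ∈ T, w s * g a := by rw [← Finset.sum_mul, hwT, one_mul]
    _ ≤ ∑ s ∈ T, w s * g s :=
        Finset.sum_le_sum (fun s hs => mul_le_mul_of_nonneg_left (ha s hs) (hw0 s (hTsub hs)))
    _ = g x := hgx.symm
  have hgb : g x ≤ g b := by
    calc g x = ∑ s ∈ T, w s * g s := hgx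
    _ ≤ ∑ s ∈ T, w s * g b :=
        Finset.sum_le_sum (fun s hs => mul_le_mul_of_nonneg_left (hb s hs) (hw0 s (hTsub hs)))
    _ = g b := by rw [← Finset.sum_mul, hwT, one_mul]
  have haS : a ∈ S := hTsub haT
  have hbS : b ∈ S := hTsub hbT
  have hmem : ∀ {p q : EuclideanSpace ℝ (Fin 2)}, p ∈ S → q ∈ S → x ∈ segment ℝ p q →
      x ∈ ⋃ a ∈ S, ⋃ b ∈ S, segment ℝ a b := by
    intro p q hp hq hseg
    simp only [Set.mem_iUnion]
    exact ⟨p, hp, q, hq, hseg⟩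
  by_cases hab : g b ≤ g a
  · have hgax : g a = g x := le_antisymm hga (hgb.trans hab)
    have : a = x := hinj a x ((hfT a haT).trans rfl) hgax
    exact hmem haS hbS (this ▸ left_mem_segment ℝ a b)
  · push_neg at hab
    set t : ℝ := (g x - g a) / (g b - g a) with htdef
    have hden : (0:ℝ) < g b - g a := sub_pos.mpr hab
    have ht0 : 0 ≤ t := div_nonneg (sub_nonneg.mpr hga) hden.le
    have ht1 : t ≤ 1 := (div_le_one hden).mpr (by linarith)
    have hx_eq : (1 - t) • a + t • b = x := by
      apply hinj
      · rw [map_add, f.map_smul, f.map_smul, smul_eq_mul, smul_eq_mul, hfT a haT, hfT b hbT]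
        ring
      · have hden' : g b - g a ≠ 0 := ne_of_gt hden
        rw [map_add, g.map_smul, g.map_smul, smul_eq_mul, smul_eq_mul, htdef]
        field_simp
        ring
    exact hmem haS hbS ⟨1 - t, t, by linarith, ht0, by ring, hx_eq⟩

private lemma frontier_measure_lt_top
    (S : Finset (EuclideanSpace ℝ (Fin 2)))
    (hne : (interior (convexHull ℝ (S : Set (EuclideanSpace ℝ (Fin 2))))).Nonempty) :
    μH[1] (frontier (convexHull ℝ (S : Set (EuclideanSpace ℝ (Fin 2))))) < ⊤ := by
  refine lt_of_le_of_lt (measure_mono (frontier_subset_segments S hne)) ?_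
  refine lt_of_le_of_lt (measure_biUnion_finset_le _ _) ?_
  rw [ENNReal.sum_lt_top]
  intro a _
  refine lt_of_le_of_lt (measure_biUnion_finset_le _ _) ?_
  rw [ENNReal.sum_lt_top]
  intro b _
  rw [hausdorffMeasure_segment]
  exact edist_lt_top a b

theorem stmt3
    (P : Set (EuclideanSpace ℝ (Fin 2)))
    (S : Finset (EuclideanSpace ℝ (Fin 2)))
    (hP : P = interior (convexHull ℝ (S : Set (EuclideanSpace ℝ (Fin 2)))))
    (hPne : P.Nonempty) (hPbdd : Bornology.IsBounded P)
    (α β : EuclideanSpace ℝ (Fin 2) → ℝ)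
    (hαmeas : Measurable α) (hβmeas : Measurable β)
    (cα Cα : ℝ) (hcα : 0 < cα)
    (hα : ∀ x ∈ closure P, cα ≤ α x ∧ α x ≤ Cα)
    (cβ Cβ : ℝ) (hcβ : 0 < cβ)
    (hβ : ∀ x ∈ closure P, cβ ≤ β x ∧ β x ≤ Cβ)
    (A : EuclideanSpace ℝ (Fin 2) →ᵃ[ℝ] ℝ)
    (L : (EuclideanSpace ℝ (Fin 2) → ℝ) → ℝ)
    (hL : ∀ u, L u = (∫ x in frontier P, α x * u x ∂(μH[1]))
        - ∫ x in P, A x * β x * u x)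
    (hLaff : ∀ f : EuclideanSpace ℝ (Fin 2) →ᵃ[ℝ] ℝ, L (fun x => f x) = 0)
    (p₀ : EuclideanSpace ℝ (Fin 2)) (hp₀ : p₀ ∈ P)
    (C₁ : Set (EuclideanSpace ℝ (Fin 2) → ℝ))
    (hC₁ : C₁ = {u | ConvexOn ℝ (closure P) u ∧
        (∫ x in frontier P, α x * u x ∂(μH[1])) = 1 ∧
        (∀ x ∈ P, 0 ≤ u x) ∧ u p₀ = 0})
    -- (i) : L is positive on every sPL convex function with nonempty crease
    (hsPL : ∀ L₀ : EuclideanSpace ℝ (Fin 2) →ᵃ[ℝ] ℝ, L₀ ≠ 0 →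
        (P ∩ {x | L₀ x = 0}).Nonempty →
        0 < L (fun x => max (L₀ x) 0))
    -- (ii) : u₀ ∈ C₁ attains the infimum of L over C₁ and L u₀ ≤ 0
    (u₀ : EuclideanSpace ℝ (Fin 2) → ℝ) (hu₀ : u₀ ∈ C₁)
    (hmin : ∀ u ∈ C₁, L u₀ ≤ L u) (hL₀le : L u₀ ≤ 0)
    -- (iii) : ψ = max {L₀, 0} is a sPL convex function with nonempty crease
    (L₀ : EuclideanSpace ℝ (Fin 2) →ᵃ[ℝ] ℝ) (hL₀ : L₀ ≠ 0)
    (hcrease : (P ∩ {x | L₀ x = 0}).Nonempty)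
    (ψ : EuclideanSpace ℝ (Fin 2) → ℝ) (hψ : ψ = fun x => max (L₀ x) 0)
    -- (iv) : a₀ > 0 and u' = u₀ - a₀ ψ is convex with inf_P u' = u' p₀ = 0
    (a₀ : ℝ) (ha₀ : 0 < a₀)
    (u' : EuclideanSpace ℝ (Fin 2) → ℝ) (hu' : u' = fun x => u₀ x - a₀ * ψ x)
    (hu'conv : ConvexOn ℝ (closure P) u')
    (hu'nonneg : ∀ x ∈ P, 0 ≤ u' x) (hu'p₀ : u' p₀ = 0) :
    False := by
  classical
  -- Basic geometry
  have hKconv : Convex ℝ (convexHull ℝ (S : Set (EuclideanSpace ℝ (Fin 2)))) :=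
    convex_convexHull ℝ _
  have hKcompact : IsCompact (convexHull ℝ (S : Set (EuclideanSpace ℝ (Fin 2)))) :=
    S.finite_toSet.isCompact_convexHull ℝ
  have hKclosed : IsClosed (convexHull ℝ (S : Set (EuclideanSpace ℝ (Fin 2)))) :=
    hKcompact.isClosed
  have hPopen : IsOpen P := by rw [hP]; exact isOpen_interior
  have hintne : (interior (convexHull ℝ (S : Set (EuclideanSpace ℝ (Fin 2))))).Nonempty := by
    rwa [hP] at hPne
  have hPK : closure P = convexHull ℝ (S : Set (EuclideanSpace ℝ (Fin 2))) := by
    apply Subset.antisymm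
    · rw [hP]; exact closure_minimal interior_subset hKclosed
    · intro y hy
      have := convexK_subset_closure_interior hKconv hintne hy
      rwa [← hP] at this
  have hPsubcl : P ⊆ closure P := subset_closure
  have hfrsub : frontier P ⊆ closure P := frontier_subset_closure
  have hPmeas : MeasurableSet P := hPopen.measurableSet
  have hfrmeas : MeasurableSet (frontier P) := isClosed_frontier.measurableSet
  have hfrP : frontier P = frontier (convexHull ℝ (S : Set (EuclideanSpace ℝ (Fin 2)))) := by
    have h1 : frontier P = closure P \ interior P := rfl
    have h2 : frontier (convexHull ℝ (S : Set (EuclideanSpace ℝ (Fin 2))))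
        = closure (convexHull ℝ (S : Set (EuclideanSpace ℝ (Fin 2))))
          \ interior (convexHull ℝ (S : Set (EuclideanSpace ℝ (Fin 2)))) := rfl
    rw [h1, h2, hPK, hPopen.interior_eq, hP, hKclosed.closure_eq]
  -- finite measures
  have hμfr : μH[1] (frontier P) < ⊤ := by
    rw [hfrP]; exact frontier_measure_lt_top S hintne
  haveI hfin1 : IsFiniteMeasure ((μH[1] :
      Measure (EuclideanSpace ℝ (Fin 2))).restrict (frontier P)) :=
    ⟨by rwa [Measure.restrict_apply_univ]⟩
  have hvolP : (volume : Measure (EuclideanSpace ℝ (Fin 2))) P < ⊤ := hPbdd.measure_lt_top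
  haveI hfin2 : IsFiniteMeasure ((volume : Measure (EuclideanSpace ℝ (Fin 2))).restrict P) :=
    ⟨by rwa [Measure.restrict_apply_univ]⟩
  -- unpack u₀
  rw [hC₁] at hu₀
  obtain ⟨hu₀conv, hBu₀, hu₀nonneg, hu₀p₀⟩ := hu₀
  -- nonneg on closure
  have hnncl : ∀ u : EuclideanSpace ℝ (Fin 2) → ℝ, ConvexOn ℝ (closure P) u →
      (∀ x ∈ P, 0 ≤ u x) → u p₀ = 0 → ∀ y ∈ closure P, 0 ≤ u y := by
    intro u hconv hnn hup₀ y hy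
    have hyK : y ∈ convexHull ℝ (S : Set (EuclideanSpace ℝ (Fin 2))) := by rwa [hPK] at hy
    have hzP : (1/2 : ℝ) • p₀ + (1/2 : ℝ) • y ∈ P := by
      rw [hP]
      exact hKconv.combo_interior_closure_mem_interior (by rwa [hP] at hp₀)
        (subset_closure hyK) one_half_pos (by norm_num) (by norm_num)
    have hcomb := hconv.2 (hPsubcl hp₀) hy (le_of_lt one_half_pos) (le_of_lt one_half_pos)
      (by norm_num)
    have h0 : 0 ≤ u ((1/2:ℝ) • p₀ + (1/2:ℝ) • y) := hnn _ hzP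
    rw [hup₀] at hcomb
    simp only [smul_eq_mul] at hcomb
    linarith
  have hu₀cl : ∀ y ∈ closure P, 0 ≤ u₀ y := hnncl u₀ hu₀conv hu₀nonneg hu₀p₀
  have hu'cl : ∀ y ∈ closure P, 0 ≤ u' y := hnncl u' hu'conv hu'nonneg hu'p₀
  -- ψ basics
  have hψcont : Continuous ψ := by
    rw [hψ]
    exact (AffineMap.continuous_linear_iff.mp L₀.linear.continuous_of_finiteDimensional).max
      continuous_const
  have hψnn : ∀ x, 0 ≤ ψ x := by intro x; rw [hψ]; exact le_max_right _ _
  have hAcont : Continuous A :=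
    AffineMap.continuous_linear_iff.mp A.linear.continuous_of_finiteDimensional
  have hclcomp : IsCompact (closure P) := by rw [hPK]; exact hKcompact
  obtain ⟨Mψ, hMψ⟩ := hclcomp.exists_bound_of_continuousOn hψcont.continuousOn
  obtain ⟨MA, hMA⟩ := hclcomp.exists_bound_of_continuousOn hAcont.continuousOn
  have hMA0 : 0 ≤ MA := (norm_nonneg _).trans (hMA p₀ (hPsubcl hp₀))
  have hMψ0 : 0 ≤ Mψ := (norm_nonneg _).trans (hMψ p₀ (hPsubcl hp₀))
  -- upper bound for u₀ on closure P
  have hSne : S.Nonempty := by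
    have h1 : (convexHull ℝ (S : Set (EuclideanSpace ℝ (Fin 2)))).Nonempty :=
      ⟨p₀, by rw [← hPK]; exact hPsubcl hp₀⟩
    rw [convexHull_nonempty_iff] at h1
    exact Finset.coe_nonempty.mp h1
  have hu₀bdd : ∀ x ∈ closure P, u₀ x ≤ S.sup' hSne u₀ := by
    intro x hx
    have hconv' : ConvexOn ℝ (convexHull ℝ (S : Set (EuclideanSpace ℝ (Fin 2)))) u₀ := by
      rwa [hPK] at hu₀conv
    obtain ⟨y, hyS, hxy⟩ := hconv'.exists_ge_of_mem_convexHull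
      (subset_convexHull ℝ _) (by rwa [hPK] at hx)
    exact hxy.trans (Finset.le_sup' u₀ hyS)
  set M₀ : ℝ := S.sup' hSne u₀ with hM₀def
  have hM₀0 : 0 ≤ M₀ := (hu₀cl p₀ (hPsubcl hp₀)).trans (hu₀bdd p₀ (hPsubcl hp₀))
  -- continuity on P
  have hPconv : Convex ℝ P := by rw [hP]; exact hKconv.interior
  have hu₀contP : ContinuousOn u₀ P :=
    ConvexOn.continuousOn hPopen (hu₀conv.subset hPsubcl hPconv)
  have hψbd : ∀ x ∈ closure P, ψ x ≤ Mψ := fun x hx =>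
    (le_abs_self _).trans (by rw [← Real.norm_eq_abs]; exact hMψ x hx)
  -- boundary integrability
  have hαψmeas : AEStronglyMeasurable (fun x => α x * ψ x)
      ((μH[1] : Measure (EuclideanSpace ℝ (Fin 2))).restrict (frontier P)) :=
    (hαmeas.mul hψcont.measurable).aestronglyMeasurable
  have hIαψ : Integrable (fun x => α x * ψ x)
      ((μH[1] : Measure (EuclideanSpace ℝ (Fin 2))).restrict (frontier P)) := by
    refine Integrable.mono' (integrable_const (Cα * Mψ)) hαψmeas ?_
    filter_upwards [ae_restrict_mem hfrmeas] with x hx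
    have hxcl := hfrsub hx
    obtain ⟨h1, h2⟩ := hα x hxcl
    have h3 := hψnn x
    have h4 := hψbd x hxcl
    rw [Real.norm_eq_abs, abs_of_nonneg (mul_nonneg (hcα.le.trans h1) h3)]
    exact mul_le_mul h2 h4 h3 (by linarith)
  have hIαu₀ : Integrable (fun x => α x * u₀ x)
      ((μH[1] : Measure (EuclideanSpace ℝ (Fin 2))).restrict (frontier P)) := by
    by_contra h
    rw [integral_undef h] at hBu₀
    exact one_ne_zero hBu₀.symm
  have hfunu' : (fun x => α x * u' x) = fun x => α x * u₀ x - a₀ * (α x * ψ x) := by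
    funext x; rw [hu']; ring
  have hIαu' : Integrable (fun x => α x * u' x)
      ((μH[1] : Measure (EuclideanSpace ℝ (Fin 2))).restrict (frontier P)) := by
    rw [hfunu']; exact hIαu₀.sub (hIαψ.const_mul a₀)
  have hcval : (∫ x in frontier P, α x * u' x ∂(μH[1]))
      = 1 - a₀ * ∫ x in frontier P, α x * ψ x ∂(μH[1]) := by
    rw [hfunu', integral_sub hIαu₀ (hIαψ.const_mul a₀), hBu₀, integral_const_mul]
  have hBψnn : 0 ≤ ∫ x in frontier P, α x * ψ x ∂(μH[1]) :=
    setIntegral_nonneg hfrmeas fun x hx =>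
      mul_nonneg (hcα.le.trans (hα x (hfrsub hx)).1) (hψnn x)
  have hcnn : 0 ≤ ∫ x in frontier P, α x * u' x ∂(μH[1]) :=
    setIntegral_nonneg hfrmeas fun x hx =>
      mul_nonneg (hcα.le.trans (hα x (hfrsub hx)).1) (hu'cl x (hfrsub hx))
  -- interior integrability
  have hCβ0 : 0 ≤ Cβ := by have h := hβ p₀ (hPsubcl hp₀); linarith
  have hβbd : ∀ x ∈ closure P, |β x| ≤ Cβ := fun x hx =>
    abs_le.mpr ⟨by have h := hβ x hx; linarith, (hβ x hx).2⟩
  have hIu₀vol : Integrable (fun x => A x * β x * u₀ x)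
      ((volume : Measure (EuclideanSpace ℝ (Fin 2))).restrict P) := by
    have hmeas : AEStronglyMeasurable (fun x => A x * β x * u₀ x)
        ((volume : Measure (EuclideanSpace ℝ (Fin 2))).restrict P) :=
      (((hAcont.aemeasurable).mul hβmeas.aemeasurable).mul
        (hu₀contP.aemeasurable hPmeas)).aestronglyMeasurable
    refine Integrable.mono' (integrable_const (MA * Cβ * M₀)) hmeas ?_
    filter_upwards [ae_restrict_mem hPmeas] with x hx
    have hxcl := hPsubcl hx
    have h1 : |A x| ≤ MA := by rw [← Real.norm_eq_abs]; exact hMA x hxcl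
    have h2 := hβbd x hxcl
    have h3 : |u₀ x| ≤ M₀ := abs_le.mpr ⟨by linarith [hu₀cl x hxcl], hu₀bdd x hxcl⟩
    rw [Real.norm_eq_abs, abs_mul, abs_mul]
    exact mul_le_mul (mul_le_mul h1 h2 (abs_nonneg _) hMA0) h3 (abs_nonneg _)
      (mul_nonneg hMA0 hCβ0)
  have hIψvol : Integrable (fun x => A x * β x * ψ x)
      ((volume : Measure (EuclideanSpace ℝ (Fin 2))).restrict P) := by
    have hmeas : AEStronglyMeasurable (fun x => A x * β x * ψ x)
        ((volume : Measure (EuclideanSpace ℝ (Fin 2))).restrict P) :=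
      ((hAcont.measurable.mul hβmeas).mul hψcont.measurable).aestronglyMeasurable
    refine Integrable.mono' (integrable_const (MA * Cβ * Mψ)) hmeas ?_
    filter_upwards [ae_restrict_mem hPmeas] with x hx
    have hxcl := hPsubcl hx
    have h1 : |A x| ≤ MA := by rw [← Real.norm_eq_abs]; exact hMA x hxcl
    have h2 := hβbd x hxcl
    have h3 : |ψ x| ≤ Mψ := abs_le.mpr ⟨by linarith [hψnn x], hψbd x hxcl⟩
    rw [Real.norm_eq_abs, abs_mul, abs_mul]
    exact mul_le_mul (mul_le_mul h1 h2 (abs_nonneg _) hMA0) h3 (abs_nonneg _)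
      (mul_nonneg hMA0 hCβ0)
  have hfunvol : (fun x => A x * β x * u' x)
      = fun x => A x * β x * u₀ x - a₀ * (A x * β x * ψ x) := by
    funext x; rw [hu']; ring
  have hIu'vol : Integrable (fun x => A x * β x * u' x)
      ((volume : Measure (EuclideanSpace ℝ (Fin 2))).restrict P) := by
    rw [hfunvol]; exact hIu₀vol.sub (hIψvol.const_mul a₀)
  have hIval : (∫ x in P, A x * β x * u' x)
      = (∫ x in P, A x * β x * u₀ x) - a₀ * ∫ x in P, A x * β x * ψ x := by
    rw [hfunvol, integral_sub hIu₀vol (hIψvol.const_mul a₀), integral_const_mul]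
  -- L relations
  have hLψpos : 0 < L ψ := by rw [hψ]; exact hsPL L₀ hL₀ hcrease
  have hLu' : L u' = L u₀ - a₀ * L ψ := by
    rw [hL u', hL u₀, hL ψ, hIval, hBu₀, hcval]
    ring
  -- case split on c
  rcases eq_or_lt_of_le hcnn with hc0 | hcpos
  · -- c = 0
    have hvmem : (fun x => u₀ x + u' x) ∈ C₁ := by
      rw [hC₁]
      refine ⟨hu₀conv.add hu'conv, ?_, ?_, ?_⟩
      · have h1 : (fun x => α x * (u₀ x + u' x)) = fun x => α x * u₀ x + α x * u' x := by
          funext x; ring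
        rw [h1, integral_add hIαu₀ hIαu', hBu₀, ← hc0, add_zero]
      · intro x hx; exact add_nonneg (hu₀nonneg x hx) (hu'nonneg x hx)
      · show u₀ p₀ + u' p₀ = 0
        rw [hu₀p₀, hu'p₀, add_zero]
    have hLv : L (fun x => u₀ x + u' x) = L u₀ + L u' := by
      rw [hL (fun x => u₀ x + u' x), hL u₀, hL u']
      have h1 : (fun x => α x * (u₀ x + u' x)) = fun x => α x * u₀ x + α x * u' x := by
        funext x; ring
      have h2 : (fun x => A x * β x * (u₀ x + u' x))
          = fun x => A x * β x * u₀ x + A x * β x * u' x := by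
        funext x; ring
      rw [h1, h2, integral_add hIαu₀ hIαu', integral_add hIu₀vol hIu'vol]
      ring
    have hge := hmin _ hvmem
    rw [hLv] at hge
    nlinarith [hLψpos, ha₀, hL₀le, hLu']
  · -- c > 0
    have hcne : (∫ x in frontier P, α x * u' x ∂(μH[1])) ≠ 0 := ne_of_gt hcpos
    set civ : ℝ := (∫ x in frontier P, α x * u' x ∂(μH[1]))⁻¹ with hcivdef
    have hcivnn : 0 ≤ civ := inv_nonneg.mpr hcpos.le
    have hvmem : (fun x => civ * u' x) ∈ C₁ := by
      rw [hC₁]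
      refine ⟨?_, ?_, ?_, ?_⟩
      · have h := hu'conv.smul hcivnn
        simpa [smul_eq_mul] using h
      · have h1 : (fun x => α x * (civ * u' x)) = fun x => civ * (α x * u' x) := by
          funext x; ring
        rw [h1, integral_const_mul, hcivdef, inv_mul_cancel₀ hcne]
      · intro x hx; exact mul_nonneg hcivnn (hu'nonneg x hx)
      · show civ * u' p₀ = 0
        rw [hu'p₀, mul_zero]
    have hLv : L (fun x => civ * u' x) = civ * L u' := by
      rw [hL (fun x => civ * u' x), hL u']
      have h1 : (fun x => α x * (civ * u' x)) = fun x => civ * (α x * u' x) := by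
        funext x; ring
      have h2 : (fun x => A x * β x * (civ * u' x)) = fun x => civ * (A x * β x * u' x) := by
        funext x; ring
      rw [h1, h2, integral_const_mul, integral_const_mul]
      ring
    have hkey := hmin _ hvmem
    rw [hLv] at hkey
    have hmul : (∫ x in frontier P, α x * u' x ∂(μH[1])) * L u₀ ≤ L u' := by
      have h1 := mul_le_mul_of_nonneg_left hkey hcpos.le
      rwa [hcivdef, mul_inv_cancel_left₀ hcne] at h1
    rw [hLu', hcval] at hmul
    nlinarith [hLψpos, ha₀, hL₀le, hBψnn,
      mul_nonneg (mul_nonneg ha₀.le hBψnn) (neg_nonneg.mpr hL₀le)]
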